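/- arXiv:0712.1680 — 2 statements merged into one kernel-verified Lean document; each statement's English description precedes it below -/
import Mathlib

section
/- Let f, g, h : [a,b] → [0,∞) be continuous and p > 1. Then ((∫_a^b h f dx)^p + (∫_a^b h g dx)^p)^{1/p} ≤ ∫_a^b h (f^p + g^p)^{1/p} dx. -/
lemma two_point_holder {p q u v x y : ℝ} (hpq : p.HolderConjugate q)
    (hu : 0 ≤ u) (hv : 0 ≤ v) (hx : 0 ≤ x) (hy : 0 ≤ y) :
    u * x + v * y ≤ (u ^ q + v ^ q) ^ (1 / q) * (x ^ p + y ^ p) ^ (1 / p) := by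
  have := Real.inner_le_Lp_mul_Lq (Finset.univ : Finset (Fin 2)) ![u, v] ![x, y] hpq.symm
  simpa [Fin.sum_univ_two, abs_of_nonneg hu, abs_of_nonneg hv, abs_of_nonneg hx,
    abs_of_nonneg hy] using this

theorem reverse_triangle_type (a b : ℝ) (hab : a < b) (f g h : ℝ → ℝ)
    (hf : ContinuousOn f (Set.Icc a b))
    (hg : ContinuousOn g (Set.Icc a b))
    (hh : ContinuousOn h (Set.Icc a b))
    (hfnn : ∀ x ∈ Set.Icc a b, 0 ≤ f x)
    (hgnn : ∀ x ∈ Set.Icc a b, 0 ≤ g x)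
    (hhnn : ∀ x ∈ Set.Icc a b, 0 ≤ h x)
    (p : ℝ) (hp : 1 < p) :
    ((∫ x in a..b, h x * f x) ^ p + (∫ x in a..b, h x * g x) ^ p) ^ (1 / p) ≤
      ∫ x in a..b, h x * (f x ^ p + g x ^ p) ^ (1 / p) := by
  have hp0 : 0 < p := lt_trans one_pos hp
  have hpq : p.HolderConjugate (p / (p - 1)) := Real.HolderConjugate.conjExponent hp
  set q := p / (p - 1) with hq
  set A := ∫ x in a..b, h x * f x with hA
  set B := ∫ x in a..b, h x * g x with hB
  have hIcc : Set.uIcc a b = Set.Icc a b := Set.uIcc_of_le hab.le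
  have hintf : IntervalIntegrable (fun x => h x * f x) MeasureTheory.volume a b := by
    apply ContinuousOn.intervalIntegrable; rw [hIcc]; exact hh.mul hf
  have hintg : IntervalIntegrable (fun x => h x * g x) MeasureTheory.volume a b := by
    apply ContinuousOn.intervalIntegrable; rw [hIcc]; exact hh.mul hg
  have hcontR : ContinuousOn (fun x => h x * (f x ^ p + g x ^ p) ^ (1 / p)) (Set.Icc a b) := by
    apply hh.mul
    apply ContinuousOn.rpow_const
    · exact (hf.rpow_const (fun x hx => Or.inr hp0.le)).add
        (hg.rpow_const (fun x hx => Or.inr hp0.le))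
    · intro x hx; right; positivity
  have hintR : IntervalIntegrable (fun x => h x * (f x ^ p + g x ^ p) ^ (1 / p))
      MeasureTheory.volume a b := by
    apply ContinuousOn.intervalIntegrable; rwa [hIcc]
  have hAnn : 0 ≤ A := intervalIntegral.integral_nonneg hab.le
    (fun x hx => mul_nonneg (hhnn x hx) (hfnn x hx))
  have hBnn : 0 ≤ B := intervalIntegral.integral_nonneg hab.le
    (fun x hx => mul_nonneg (hhnn x hx) (hgnn x hx))
  have hRnn : 0 ≤ ∫ x in a..b, h x * (f x ^ p + g x ^ p) ^ (1 / p) :=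
    intervalIntegral.integral_nonneg hab.le
      (fun x hx => mul_nonneg (hhnn x hx) (Real.rpow_nonneg
        (add_nonneg (Real.rpow_nonneg (hfnn x hx) p) (Real.rpow_nonneg (hgnn x hx) p)) _))
  set S := (A ^ p + B ^ p) ^ (1 / p) with hSdef
  rcases eq_or_lt_of_le (add_nonneg (Real.rpow_nonneg hAnn p) (Real.rpow_nonneg hBnn p)) with hzero | hpos
  · rw [hSdef, ← hzero, Real.zero_rpow (by positivity : (0:ℝ) < 1/p).ne']
    exact hRnn
  · -- S > 0
    have hSpos : 0 < S := Real.rpow_pos_of_pos hpos _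
    have hSp : S ^ p = A ^ p + B ^ p := by
      rw [hSdef, one_div, Real.rpow_inv_rpow (le_of_lt hpos) hp0.ne']
    set u := (A / S) ^ (p - 1) with hu
    set v := (B / S) ^ (p - 1) with hv
    have hunn : 0 ≤ u := Real.rpow_nonneg (by positivity) _
    have hvnn : 0 ≤ v := Real.rpow_nonneg (by positivity) _
    have hp1 : (0:ℝ) < p - 1 := by linarith
    have hqmul : (p - 1) * q = p := by
      rw [hq]; field_simp
    have huq : u ^ q = (A / S) ^ p := by
      rw [hu, ← Real.rpow_mul (div_nonneg hAnn hSpos.le), hqmul]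
    have hvq : v ^ q = (B / S) ^ p := by
      rw [hv, ← Real.rpow_mul (div_nonneg hBnn hSpos.le), hqmul]
    have hsum1 : u ^ q + v ^ q = 1 := by
      rw [huq, hvq, Real.div_rpow hAnn hSpos.le, Real.div_rpow hBnn hSpos.le,
        ← add_div, hSp, div_self hpos.ne']
    have hkey : u * A + v * B = S := by
      have hAe : A ^ p = A ^ (p - 1) * A := by
        nth_rewrite 1 [show p = (p - 1) + 1 by ring]
        rw [Real.rpow_add' hAnn (by linarith), Real.rpow_one]
      have hBe : B ^ p = B ^ (p - 1) * B := by
        nth_rewrite 1 [show p = (p - 1) + 1 by ring]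
        rw [Real.rpow_add' hBnn (by linarith), Real.rpow_one]
      have hArw : u * A = A ^ p / S ^ (p - 1) := by
        rw [hu, Real.div_rpow hAnn hSpos.le, div_mul_eq_mul_div, ← hAe]
      have hBrw : v * B = B ^ p / S ^ (p - 1) := by
        rw [hv, Real.div_rpow hBnn hSpos.le, div_mul_eq_mul_div, ← hBe]
      rw [hArw, hBrw, ← add_div, ← hSp]
      rw [show p = 1 + (p - 1) by ring, Real.rpow_add hSpos, Real.rpow_one]
      field_simp
      ring_nf
    calc S = u * A + v * B := hkey.symm
      _ = ∫ x in a..b, (u * (h x * f x) + v * (h x * g x)) := by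
          rw [intervalIntegral.integral_add (hintf.const_mul u) (hintg.const_mul v),
            intervalIntegral.integral_const_mul, intervalIntegral.integral_const_mul]
      _ ≤ ∫ x in a..b, h x * (f x ^ p + g x ^ p) ^ (1 / p) := by
          apply intervalIntegral.integral_mono_on hab.le
            ((hintf.const_mul u).add (hintg.const_mul v)) hintR
          intro x hx
          have h2 := two_point_holder hpq hunn hvnn (hfnn x hx) (hgnn x hx)
          rw [hsum1, Real.one_rpow, one_mul] at h2
          calc u * (h x * f x) + v * (h x * g x)
              = h x * (u * f x + v * g x) := by ring
            _ ≤ h x * (f x ^ p + g x ^ p) ^ (1 / p) :=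
                mul_le_mul_of_nonneg_left h2 (hhnn x hx)
end

section
/- Let f, g, h : [a,b] → [0,∞) be continuous and 0 < p < 1. Then ((∫_a^b h f dx)^p + (∫_a^b h g dx)^p)^{1/p} ≥ ∫_a^b h (f^p + g^p)^{1/p} dx. -/
open MeasureTheory Set Real
open scoped ENNReal

lemma aux_memLp (a b : ℝ) (F : ℝ → ℝ) (hF : ContinuousOn F (Set.Icc a b))
    (q : ℝ≥0∞) : MemLp F q (volume.restrict (Set.Icc a b)) := by
  obtain ⟨C, hC⟩ := (isCompact_Icc (a := a) (b := b)).exists_bound_of_continuousOn hF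
  have hmeas : AEStronglyMeasurable F (volume.restrict (Icc a b)) :=
    hF.aestronglyMeasurable measurableSet_Icc
  have : MemLp F ⊤ (volume.restrict (Icc a b)) :=
    memLp_top_of_bound hmeas C (ae_restrict_of_forall_mem measurableSet_Icc hC)
  exact this.mono_exponent le_top

theorem reverse_triangle_type_small_p (a b : ℝ) (hab : a < b) (f g h : ℝ → ℝ)
    (hf : ContinuousOn f (Set.Icc a b))
    (hg : ContinuousOn g (Set.Icc a b))
    (hh : ContinuousOn h (Set.Icc a b))
    (hfnn : ∀ x ∈ Set.Icc a b, 0 ≤ f x)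
    (hgnn : ∀ x ∈ Set.Icc a b, 0 ≤ g x)
    (hhnn : ∀ x ∈ Set.Icc a b, 0 ≤ h x)
    (p : ℝ) (hp : 0 < p) (hp1 : p < 1) :
    ((∫ x in a..b, h x * f x) ^ p + (∫ x in a..b, h x * g x) ^ p) ^ (1 / p) ≥
      ∫ x in a..b, h x * (f x ^ p + g x ^ p) ^ (1 / p) := by
  have h1p : (0:ℝ) < 1 - p := by linarith
  set μ := volume.restrict (Set.Icc a b) with hμ
  have hIoc : volume.restrict (Set.Ioc a b) = μ :=
    Measure.restrict_congr_set Ioc_ae_eq_Icc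
  rw [intervalIntegral.integral_of_le hab.le, intervalIntegral.integral_of_le hab.le,
    intervalIntegral.integral_of_le hab.le, hIoc]
  set φ : ℝ → ℝ := fun x => (f x ^ p + g x ^ p) ^ (1 / p) with hφdef
  -- continuity facts
  have hφc : ContinuousOn φ (Set.Icc a b) := by
    apply ContinuousOn.rpow_const
    · exact (hf.rpow_const (fun x _ => Or.inr hp.le)).add
        (hg.rpow_const (fun x _ => Or.inr hp.le))
    · exact fun x _ => Or.inr (by positivity)
  have hφnn : ∀ x ∈ Set.Icc a b, 0 ≤ φ x := by
    intro x hx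
    exact Real.rpow_nonneg (by
      have := hfnn x hx; have := hgnn x hx; positivity) _
  -- the integrals
  set A := ∫ x, h x * f x ∂μ with hA
  set B := ∫ x, h x * g x ∂μ with hB
  set I := ∫ x, h x * φ x ∂μ with hI
  have hAnn : 0 ≤ A := by
    apply integral_nonneg_of_ae
    filter_upwards [ae_restrict_mem measurableSet_Icc] with x hx
    exact mul_nonneg (hhnn x hx) (hfnn x hx)
  have hBnn : 0 ≤ B := by
    apply integral_nonneg_of_ae
    filter_upwards [ae_restrict_mem measurableSet_Icc] with x hx
    exact mul_nonneg (hhnn x hx) (hgnn x hx)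
  have hInn : 0 ≤ I := by
    apply integral_nonneg_of_ae
    filter_upwards [ae_restrict_mem measurableSet_Icc] with x hx
    exact mul_nonneg (hhnn x hx) (hφnn x hx)
  -- key pointwise identity
  have hkey : ∀ x ∈ Set.Icc a b, h x * φ x =
      (h x * f x) ^ p * (h x * φ x) ^ (1 - p) +
      (h x * g x) ^ p * (h x * φ x) ^ (1 - p) := by
    intro x hx
    have hF := hfnn x hx; have hG := hgnn x hx; have hH := hhnn x hx
    have hΦ := hφnn x hx
    have hφp : φ x ^ p = f x ^ p + g x ^ p := by
      rw [hφdef]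
      rw [one_div, Real.rpow_inv_rpow (by positivity) hp.ne']
    rw [Real.mul_rpow hH hF, Real.mul_rpow hH hG, Real.mul_rpow hH hΦ]
    have : h x ^ p * (h x ^ (1-p) * φ x ^ (1-p)) * (f x ^ p + g x ^ p)
        = h x * φ x := by
      rw [← hφp,
        show h x ^ p * (h x ^ (1-p) * φ x ^ (1-p)) * φ x ^ p
          = h x ^ p * h x ^ (1-p) * (φ x ^ (1-p) * φ x ^ p) from by ring,
        ← Real.rpow_add' hH (show p + (1-p) ≠ 0 by norm_num),
        ← Real.rpow_add' hΦ (show (1-p) + p ≠ 0 by norm_num),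
        show p + (1-p) = (1:ℝ) from by ring, show (1-p) + p = (1:ℝ) from by ring,
        Real.rpow_one, Real.rpow_one]
    linear_combination -this
  -- split the integral
  have hint1 : Integrable (fun x => (h x * f x) ^ p * (h x * φ x) ^ (1 - p)) μ := by
    rw [← memLp_one_iff_integrable]
    apply aux_memLp
    exact ((hh.mul hf).rpow_const (fun x _ => Or.inr hp.le)).mul
      ((hh.mul hφc).rpow_const (fun x _ => Or.inr h1p.le))
  have hint2 : Integrable (fun x => (h x * g x) ^ p * (h x * φ x) ^ (1 - p)) μ := by
    rw [← memLp_one_iff_integrable]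
    apply aux_memLp
    exact ((hh.mul hg).rpow_const (fun x _ => Or.inr hp.le)).mul
      ((hh.mul hφc).rpow_const (fun x _ => Or.inr h1p.le))
  have hsplit : I = (∫ x, (h x * f x) ^ p * (h x * φ x) ^ (1 - p) ∂μ) +
      (∫ x, (h x * g x) ^ p * (h x * φ x) ^ (1 - p) ∂μ) := by
    rw [← integral_add hint1 hint2]
    apply integral_congr_ae
    filter_upwards [ae_restrict_mem measurableSet_Icc] with x hx
    exact hkey x hx
  -- conjugate exponents
  have hpq : (1/p).HolderConjugate (1/(1-p)) := by
    rw [Real.holderConjugate_iff]; constructor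
    · rw [lt_div_iff₀ hp]; linarith
    · rw [one_div, one_div, inv_inv, inv_inv]; ring
  -- Hölder applications
  have holder : ∀ (F : ℝ → ℝ), ContinuousOn F (Set.Icc a b) →
      (∀ x ∈ Set.Icc a b, 0 ≤ F x) →
      (∫ x, (h x * F x) ^ p * (h x * φ x) ^ (1 - p) ∂μ) ≤
        (∫ x, h x * F x ∂μ) ^ p * I ^ (1 - p) := by
    intro F hFc hFnn
    have key := integral_mul_le_Lp_mul_Lq_of_nonneg (μ := μ) hpq
      (f := fun x => (h x * F x) ^ p) (g := fun x => (h x * φ x) ^ (1 - p))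
      (by filter_upwards [ae_restrict_mem measurableSet_Icc] with x hx
          exact Real.rpow_nonneg (mul_nonneg (hhnn x hx) (hFnn x hx)) _)
      (by filter_upwards [ae_restrict_mem measurableSet_Icc] with x hx
          exact Real.rpow_nonneg (mul_nonneg (hhnn x hx) (hφnn x hx)) _)
      (aux_memLp a b _ ((hh.mul hFc).rpow_const (fun x _ => Or.inr hp.le)) _)
      (aux_memLp a b _ ((hh.mul hφc).rpow_const (fun x _ => Or.inr h1p.le)) _)
    have e1 : (∫ x, ((h x * F x) ^ p) ^ (1/p) ∂μ) = ∫ x, h x * F x ∂μ := by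
      apply integral_congr_ae
      filter_upwards [ae_restrict_mem measurableSet_Icc] with x hx
      rw [← Real.rpow_mul (mul_nonneg (hhnn x hx) (hFnn x hx)),
        mul_one_div_cancel hp.ne', Real.rpow_one]
    have e2 : (∫ x, ((h x * φ x) ^ (1-p)) ^ (1/(1-p)) ∂μ) = I := by
      apply integral_congr_ae
      filter_upwards [ae_restrict_mem measurableSet_Icc] with x hx
      rw [← Real.rpow_mul (mul_nonneg (hhnn x hx) (hφnn x hx)),
        mul_one_div_cancel h1p.ne', Real.rpow_one]
    rw [e1, e2, one_div_one_div, one_div_one_div] at key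
    exact key
  have hbound : I ≤ (A ^ p + B ^ p) * I ^ (1 - p) := by
    calc I = _ := hsplit
      _ ≤ A ^ p * I ^ (1 - p) + B ^ p * I ^ (1 - p) :=
          add_le_add (holder f hf hfnn) (holder g hg hgnn)
      _ = (A ^ p + B ^ p) * I ^ (1 - p) := by ring
  -- conclude
  rcases eq_or_lt_of_le hInn with hI0 | hIpos
  · rw [← hI0]
    exact Real.rpow_nonneg (by positivity) _
  · have hIp : I ^ p ≤ A ^ p + B ^ p := by
      have h2 : I * I ^ (p - 1) ≤ (A ^ p + B ^ p) * (I ^ (1 - p) * I ^ (p - 1)) := by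
        calc I * I ^ (p-1) ≤ ((A ^ p + B ^ p) * I ^ (1 - p)) * I ^ (p-1) :=
              mul_le_mul_of_nonneg_right hbound (Real.rpow_nonneg hInn _)
          _ = (A ^ p + B ^ p) * (I ^ (1 - p) * I ^ (p - 1)) := by ring
      have e3 : I ^ (1 - p) * I ^ (p - 1) = 1 := by
        rw [← Real.rpow_add hIpos]; norm_num
      have e4 : I * I ^ (p - 1) = I ^ p := by
        nth_rewrite 1 [← Real.rpow_one I]
        rw [← Real.rpow_add hIpos]; norm_num
      rw [e3, mul_one, e4] at h2
      exact h2
    calc I = (I ^ p) ^ (1/p) := by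
          rw [← Real.rpow_mul hInn, mul_one_div_cancel hp.ne', Real.rpow_one]
      _ ≤ (A ^ p + B ^ p) ^ (1/p) :=
          Real.rpow_le_rpow (Real.rpow_nonneg hInn _) hIp (by positivity)
end
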